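/- Let b_1 > 0 and b_2, ..., b_n ≥ 0 be real numbers, and let p ∈ (0,1). Then ∑_{i=1}^n b_i / (∑_{j=1}^i b_j)^p ≤ (1/(1-p)) · (∑_{i=1}^n b_i)^{1-p}. -/
import Mathlib


open Finset

lemma key_ineq {s t p : ℝ} (hs : 0 < s) (hst : s ≤ t) (hp : 0 < p) (hp1 : p < 1) :
    (t - s) / t ^ p ≤ 1 / (1 - p) * (t ^ (1 - p) - s ^ (1 - p)) := by
  have ht : 0 < t := hs.trans_le hst
  have hq : (0:ℝ) < 1 - p := by linarith
  have hber := rpow_one_add_le_one_add_mul_self (s := s / t - 1) (p := 1 - p)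
    (by have : 0 < s / t := div_pos hs ht; linarith) hq.le (by linarith)
  rw [add_sub_cancel] at hber
  have hC : (0:ℝ) < t ^ p := Real.rpow_pos_of_pos ht p
  have hA : (0:ℝ) < t ^ (1 - p) := Real.rpow_pos_of_pos ht (1 - p)
  have hdiv : (s / t) ^ (1 - p) = s ^ (1 - p) / t ^ (1 - p) :=
    Real.div_rpow hs.le ht.le _
  rw [hdiv] at hber
  have h2 : s ^ (1 - p) ≤ t ^ (1 - p) * (1 + (1 - p) * (s / t - 1)) := by
    have := mul_le_mul_of_nonneg_left hber hA.le
    rwa [mul_div_cancel₀ _ (ne_of_gt hA)] at this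
  have h3 : t ^ (1 - p) = t / t ^ p := by
    rw [eq_div_iff (ne_of_gt hC), ← Real.rpow_add ht]
    norm_num
  rw [h3] at h2 ⊢
  have h4 : t / t ^ p * (1 + (1 - p) * (s / t - 1)) = t / t ^ p - (1 - p) * ((t - s) / t ^ p) := by
    field_simp
    ring
  rw [h4] at h2
  rw [one_div_mul_eq_div, le_div_iff₀ hq]
  linarith

theorem stmt_0 (n : ℕ) (hn : 1 ≤ n) (b : ℕ → ℝ) (p : ℝ)
    (hb1 : 0 < b 1) (hb : ∀ i, 2 ≤ i → i ≤ n → 0 ≤ b i)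
    (hp : 0 < p) (hp1 : p < 1) :
    ∑ i ∈ Icc 1 n, b i / (∑ j ∈ Icc 1 i, b j) ^ p
      ≤ (1 / (1 - p)) * (∑ i ∈ Icc 1 n, b i) ^ (1 - p) := by
  have hq : (0:ℝ) < 1 - p := by linarith
  induction n, hn using Nat.le_induction with
  | base =>
    simp only [Finset.Icc_self, Finset.sum_singleton]
    have : b 1 / b 1 ^ p = b 1 ^ (1 - p) := by
      rw [Real.rpow_sub hb1, Real.rpow_one]
    rw [this]
    have hpos : 0 ≤ b 1 ^ (1 - p) := (Real.rpow_pos_of_pos hb1 _).le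
    have h1 : (1:ℝ) ≤ 1 / (1 - p) := by
      rw [le_div_iff₀ hq]; linarith
    nlinarith
  | succ n hn ih =>
    have hb' : ∀ i, 2 ≤ i → i ≤ n → 0 ≤ b i := fun i h2 hin => hb i h2 (by omega)
    have hSpos : ∀ m, 1 ≤ m → m ≤ n + 1 → 0 < ∑ j ∈ Icc 1 m, b j := by
      intro m h1 h2
      have : b 1 ≤ ∑ j ∈ Icc 1 m, b j := by
        apply Finset.single_le_sum (f := b) _ (Finset.mem_Icc.mpr ⟨le_refl 1, h1⟩)
        intro i hi
        rcases Finset.mem_Icc.mp hi with ⟨hi1, hi2⟩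
        rcases Nat.lt_or_ge i 2 with h | h
        · interval_cases i; exact hb1.le
        · exact hb i h (by omega)
      linarith
    have hSn : 0 < ∑ j ∈ Icc 1 n, b j := hSpos n hn (by omega)
    have hSn1 : 0 < ∑ j ∈ Icc 1 (n+1), b j := hSpos (n+1) (by omega) le_rfl
    have hsplit : ∑ j ∈ Icc 1 (n+1), b j = (∑ j ∈ Icc 1 n, b j) + b (n+1) :=
      Finset.sum_Icc_succ_top (by omega) b
    have hmono : (∑ j ∈ Icc 1 n, b j) ≤ ∑ j ∈ Icc 1 (n+1), b j := by
      rw [hsplit]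
      have := hb (n+1) (by omega) le_rfl
      linarith
    have hkey := key_ineq hSn hmono hp hp1
    rw [show (∑ j ∈ Icc 1 (n+1), b j) - (∑ j ∈ Icc 1 n, b j) = b (n+1) by rw [hsplit]; ring] at hkey
    rw [Finset.sum_Icc_succ_top (by omega : 1 ≤ n + 1)
      (fun i => b i / (∑ j ∈ Icc 1 i, b j) ^ p)]
    have := ih hb'
    linarith
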